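/- Let A be a normal-form udpda with initial state q0 whose unique infinite computation starting at (q0,⊥) reads infinitely many input symbols, and let t ∈ {a,f}^ω be the transcript of this computation, written uniquely as t = f^{e_0} a f^{e_1} a f^{e_2} a ⋯ with e_i ∈ ℕ for all i ≥ 0. Then for every i ≥ 0, a^i ∈ L(A) if and only if e_i > 0. -/

import Mathlib

/-- The auxiliary alphabet `{a, f}` used in transcripts of computations. -/
inductive AF
  | a
  | f
deriving DecidableEq

/-- The kind of a control state of a normal-form udpda: internal, push, or pop. -/
inductive StKind
  | internal
  | push
  | pop
deriving DecidableEq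

/-- A normal-form udpda: the state set is partitioned (by `kind`) into internal
states `Q₀`, push states `Q₊₁` and pop states `Q₋₁`, with total transition
functions `δint`, `δpush`, `δpop`, and `reads q = true` iff the transitions
from `q` read the input symbol `a` (i.e. `q ∈ R`). -/
structure NFPDA (Q Γ : Type) where
  finQ : Finite Q
  finΓ : Finite Γ
  bot : Γ
  init : Q
  final : Set Q
  kind : Q → StKind
  δint : Q → Q
  δpush : Q → Q × Γ
  δpop : Q → Γ → Q
  reads : Q → Bool

namespace NFPDA

variable {Q Γ : Type}

/-- Valid stack contents: a word in `(Γ∖{⊥})*⊥`. -/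
def IsStack (A : NFPDA Q Γ) (s : List Γ) : Prop :=
  ∃ s', A.bot ∉ s' ∧ s = s' ++ [A.bot]

/-- The unique move available at a configuration.  (A pop transition with the
bottom symbol on top of the stack leaves the stack unchanged; on valid stacks
the bottom symbol is on top exactly when the stack is a singleton.) -/
def step (A : NFPDA Q Γ) : Q × List Γ → Q × List Γ := fun c =>
  match A.kind c.1 with
  | .internal => (A.δint c.1, c.2)
  | .push => ((A.δpush c.1).1, (A.δpush c.1).2 :: c.2)
  | .pop =>
    match c.2 with
    | [] => (c.1, [])
    | [γ] => (A.δpop c.1 γ, [γ])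
    | γ :: s' => (A.δpop c.1 γ, s')

/-- The configuration reached after `k` moves of the unique infinite
computation starting at `c`. -/
def iter (A : NFPDA Q Γ) (c : Q × List Γ) (k : ℕ) : Q × List Γ := A.step^[k] c

open Classical in
/-- The contribution `μ(q)σ` of one move from state `q` to the transcript:
`f` if `q` is final, followed by `a` if the move reads an input symbol. -/
noncomputable def emit (A : NFPDA Q Γ) (q : Q) : List AF :=
  (if q ∈ A.final then [AF.f] else []) ++ (if A.reads q then [AF.a] else [])

/-- The transcript `μ(q₁)σ₁μ(q₂)σ₂⋯μ(q_k)σ_k` of the first `k` moves of the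
computation starting at `c`. -/
noncomputable def transcriptN (A : NFPDA Q Γ) (c : Q × List Γ) (k : ℕ) : List AF :=
  ((List.range k).map fun i => A.emit (A.iter c i).1).flatten

/-- The number of input symbols read during the first `k` moves of the
computation starting at `c`. -/
def readCount (A : NFPDA Q Γ) (c : Q × List Γ) (k : ℕ) : ℕ :=
  ((List.range k).filter fun i => A.reads (A.iter c i).1).length

/-- The language of a normal-form udpda: `a^n` is accepted iff the unique
computation starting at `(q₀, ⊥)` reaches a final state having read exactly
`n` input symbols. -/
def lang (A : NFPDA Q Γ) : Set ℕ :=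
  {n | ∃ k, A.readCount (A.init, [A.bot]) k = n ∧ (A.iter (A.init, [A.bot]) k).1 ∈ A.final}

end NFPDA


section AuxUdpda

namespace NFPDA

variable {Q Γ : Type}

lemma transcript_succ (A : NFPDA Q Γ) (c : Q × List Γ) (k : ℕ) :
    A.transcriptN c (k + 1) = A.transcriptN c k ++ A.emit (A.iter c k).1 := by
  simp [transcriptN, List.range_succ]

lemma readCount_succ (A : NFPDA Q Γ) (c : Q × List Γ) (k : ℕ) :
    A.readCount c (k + 1) = A.readCount c k + (if A.reads (A.iter c k).1 then 1 else 0) := by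
  simp only [readCount, List.range_succ, List.filter_append, List.length_append]
  by_cases h : A.reads (A.iter c k).1 <;> simp [h]

lemma count_emit (A : NFPDA Q Γ) (q : Q) :
    (A.emit q).count AF.a = if A.reads q then 1 else 0 := by
  by_cases hf : q ∈ A.final <;> cases hr : A.reads q <;> simp [emit, hf, hr]

lemma count_transcript (A : NFPDA Q Γ) (c : Q × List Γ) (k : ℕ) :
    (A.transcriptN c k).count AF.a = A.readCount c k := by
  induction k with
  | zero => simp [transcriptN, readCount]
  | succ k ih =>
    rw [transcript_succ, List.count_append, ih, readCount_succ, count_emit]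

lemma emit_head (A : NFPDA Q Γ) (q : Q) (h : q ∈ A.final) :
    (A.emit q)[0]? = some AF.f := by
  cases hr : A.reads q <;> simp [emit, h, hr]

lemma emit_f (A : NFPDA Q Γ) (q : Q) (j : ℕ) (h : (A.emit q)[j]? = some AF.f) :
    q ∈ A.final ∧ j = 0 := by
  by_cases hf : q ∈ A.final <;> cases hr : A.reads q <;>
    rcases j with _ | _ | j <;> simp_all [emit]

end NFPDA

/-- count of `a` among `t 0, …, t (n-1)`. -/
def cntT (t : ℕ → AF) (n : ℕ) : ℕ := ((List.range n).map t).count AF.a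

lemma cntT_zero (t : ℕ → AF) : cntT t 0 = 0 := by simp [cntT]

lemma cntT_succ (t : ℕ → AF) (n : ℕ) :
    cntT t (n + 1) = cntT t n + if t n = AF.a then 1 else 0 := by
  by_cases h : t n = AF.a <;>
    simp [cntT, List.range_succ, List.count_append, List.count_cons, h]

lemma cntT_mono (t : ℕ → AF) {n m : ℕ} (h : n ≤ m) : cntT t n ≤ cntT t m := by
  induction h with
  | refl => exact le_rfl
  | step h ih => rw [cntT_succ]; omega

lemma cntT_stable (t : ℕ → AF) (n d : ℕ)
    (h : ∀ x, n ≤ x → x < n + d → t x ≠ AF.a) : cntT t (n + d) = cntT t n := by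
  induction d with
  | zero => rfl
  | succ d ih =>
    rw [show n + (d + 1) = (n + d) + 1 from rfl, cntT_succ,
      if_neg (h _ (by omega) (by omega)), ih (fun x hx hx' => h x hx (by omega))]
    omega

end AuxUdpda

/-- Let `A` be a normal-form udpda whose unique infinite
computation from `(q₀,⊥)` reads infinitely many input symbols, let
`t ∈ {a,f}^ω` be its transcript (characterized by having every finite
transcript as a prefix), and write `t = f^{e₀} a f^{e₁} a f^{e₂} a ⋯`
(so the `i`-th occurrence of `a` is at position `(Σ_{j≤i} e_j) + i`, and
these are exactly the positions of `a`).  Then `a^i ∈ L(A)` iff `e_i > 0`. -/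
theorem acceptance_via_transcript (Q Γ : Type) (A : NFPDA Q Γ) (t : ℕ → AF) (e : ℕ → ℕ)
    (hinf : ∀ n : ℕ, ∃ k : ℕ, n ≤ A.readCount (A.init, [A.bot]) k)
    (hpre : ∀ (k i : ℕ) (h : i < (A.transcriptN (A.init, [A.bot]) k).length),
        (A.transcriptN (A.init, [A.bot]) k)[i] = t i)
    (ha : ∀ i : ℕ, t ((∑ j ∈ Finset.range (i + 1), e j) + i) = AF.a)
    (ha' : ∀ n : ℕ, t n = AF.a → ∃ i : ℕ, n = (∑ j ∈ Finset.range (i + 1), e j) + i) :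
    ∀ i : ℕ, i ∈ A.lang ↔ 0 < e i := by
  -- notation
  set c₀ : Q × List Γ := (A.init, [A.bot]) with hc₀
  set L : ℕ → ℕ := fun k => (A.transcriptN c₀ k).length with hLdef
  have hL0 : L 0 = 0 := by simp [hLdef, NFPDA.transcriptN]
  have hLsucc : ∀ k, L (k + 1) = L k + (A.emit (A.iter c₀ k).1).length := by
    intro k; simp [hLdef, NFPDA.transcript_succ]
  have hpre' : ∀ k n, n < L k → (A.transcriptN c₀ k)[n]? = some (t n) := by
    intro k n hn
    rw [List.getElem?_eq_getElem hn, hpre k n hn]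
  -- map t (range (L k)) = transcriptN k
  have hmapT : ∀ k, (List.range (L k)).map t = A.transcriptN c₀ k := by
    intro k
    apply List.ext_getElem (by simp [hLdef])
    intro n h1 h2
    simp only [List.getElem_map, List.getElem_range]
    exact (hpre k n h2).symm
  have cnt_L : ∀ k, cntT t (L k) = A.readCount c₀ k := by
    intro k
    rw [cntT, hmapT k, NFPDA.count_transcript]
  have hRC_le : ∀ k, A.readCount c₀ k ≤ L k := by
    intro k
    rw [← NFPDA.count_transcript A c₀ k]
    exact List.count_le_length
  have block : ∀ k n, n < L k → ∃ m, L m ≤ n ∧ n < L (m + 1) := by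
    intro k
    induction k with
    | zero => intro n hn; omega
    | succ k ih =>
      intro n hn
      by_cases h : n < L k
      · exact ih n h
      · exact ⟨k, by omega, hn⟩
  -- language characterization via t and cntT
  have langEquiv : ∀ i, i ∈ A.lang ↔ ∃ n, t n = AF.f ∧ cntT t n = i := by
    intro i
    constructor
    · rintro ⟨k, hrc, hfin⟩
      rw [← hc₀] at hrc hfin
      refine ⟨L k, ?_, by rw [cnt_L k]; exact hrc⟩
      have hhead := NFPDA.emit_head A _ hfin
      obtain ⟨hpos, -⟩ := List.getElem?_eq_some_iff.mp hhead
      have hlen : L k < L (k + 1) := by rw [hLsucc k]; omega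
      have h1 := hpre' (k + 1) (L k) hlen
      rw [NFPDA.transcript_succ, List.getElem?_append_right (le_refl _)] at h1
      rw [Nat.sub_self] at h1
      rw [hhead] at h1
      exact (Option.some.injEq _ _ ▸ h1).symm
    · rintro ⟨n, hf, hc⟩
      obtain ⟨k, hk⟩ := hinf (n + 1)
      have hnk : n < L k := lt_of_lt_of_le (by omega) (hRC_le k)
      obtain ⟨m, hm1, hm2⟩ := block k n hnk
      have h1 := hpre' (m + 1) n hm2
      rw [NFPDA.transcript_succ, List.getElem?_append_right hm1, hf] at h1
      obtain ⟨hfin, hj0⟩ := NFPDA.emit_f A _ _ h1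
      have hLeq : L m = (A.transcriptN c₀ m).length := rfl
      have hn : n = L m := by omega
      exact ⟨m, by rw [← cnt_L m, ← hn, hc], hfin⟩
  -- the p sequence
  set p : ℕ → ℕ := fun i => (∑ j ∈ Finset.range (i + 1), e j) + i with hpdef
  have hp0 : p 0 = e 0 := by simp [hpdef]
  have hp_succ : ∀ i, p (i + 1) = p i + e (i + 1) + 1 := by
    intro i
    simp [hpdef, Finset.sum_range_succ]
    ring
  have hp_mono : StrictMono p := strictMono_nat_of_lt_succ (fun i => by rw [hp_succ]; omega)
  have ht_a : ∀ i, t (p i) = AF.a := ha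
  have ha'' : ∀ n, t n = AF.a → ∃ j, n = p j := ha'
  have not_a_lt_p0 : ∀ n, n < p 0 → t n ≠ AF.a := by
    intro n hn h
    obtain ⟨j, rfl⟩ := ha'' n h
    have := hp_mono.monotone (Nat.zero_le j)
    omega
  have not_a_between : ∀ i n, p i < n → n < p (i + 1) → t n ≠ AF.a := by
    intro i n h1 h2 h
    obtain ⟨j, rfl⟩ := ha'' _ h
    rcases le_or_gt j i with hj | hj
    · have : p j ≤ p i := hp_mono.monotone hj; omega
    · have : p (i + 1) ≤ p j := hp_mono.monotone hj; omega
  have cnt_p : ∀ i, cntT t (p i) = i := by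
    intro i
    induction i with
    | zero =>
      have := cntT_stable t 0 (p 0) (fun x _ hx => not_a_lt_p0 x (by omega))
      simpa [cntT_zero] using this
    | succ i ih =>
      have hdecomp : p (i + 1) = (p i + 1) + e (i + 1) := by rw [hp_succ]; ring
      rw [hdecomp, cntT_stable t (p i + 1) (e (i + 1))
        (fun x hx hx' => not_a_between i x (by omega) (by omega)),
        cntT_succ, ht_a i, ih]
      simp
  have tEquiv : ∀ i, (∃ n, t n = AF.f ∧ cntT t n = i) ↔ 0 < e i := by
    intro i
    constructor
    · rintro ⟨n, hf, hc⟩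
      by_contra hno
      have he : e i = 0 := by omega
      have h1 : cntT t (p i) = i := cnt_p i
      have h2 : cntT t (p i + 1) = i + 1 := by
        rw [cntT_succ, ht_a i, h1]; simp
      have hn1 : n ≤ p i := by
        by_contra hgt
        have := cntT_mono t (show p i + 1 ≤ n by omega)
        omega
      cases i with
      | zero =>
        have hpz : p 0 = 0 := by omega
        have hn0 : n = p 0 := by omega
        rw [hn0, ht_a 0] at hf
        exact absurd hf (by simp)
      | succ j =>
        have hps : p (j + 1) = p j + 1 := by rw [hp_succ]; omega
        have hle : ¬ n ≤ p j := by
          intro hle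
          have := cntT_mono t hle
          rw [cnt_p j] at this
          omega
        have hnp : n = p (j + 1) := by omega
        rw [hnp, ht_a] at hf
        exact absurd hf (by simp)
    · intro he
      cases i with
      | zero =>
        refine ⟨0, ?_, cntT_zero t⟩
        have h0 : (0 : ℕ) < p 0 := by omega
        have hna := not_a_lt_p0 0 h0
        cases h : t 0
        · exact absurd h hna
        · rfl
      | succ j =>
        refine ⟨p j + 1, ?_, ?_⟩
        · have hlt : p j + 1 < p (j + 1) := by rw [hp_succ]; omega
          have hna := not_a_between j (p j + 1) (by omega) hlt
          cases h : t (p j + 1)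
          · exact absurd h hna
          · rfl
        · rw [cntT_succ, ht_a j, cnt_p j]; simp
  intro i
  rw [langEquiv i, tEquiv i]
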